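/- Let (f,λ,μ,φ) be a regular solution of the surface-symmetric Einstein–Vlasov–scalar field system on (0,1] attaining the given initial data at t = 1, and assume inf_r e^{−2μ̊(r)} + k ≥ 0 (which is automatic for k ∈ {0,1}). Then for all t ∈ (0,1] and r ∈ ℝ the Kretschmann scalar satisfies (R_{αβγδ}R^{αβγδ})(t,r) = K₁ + K₂ + K₃ ≥ (4/t⁶)(inf_r e^{−2μ̊(r)} + k)². In particular, if inf_r e^{−2μ̊(r)} + k > 0, the Kretschmann scalar tends to ∞ as t → 0⁺, uniformly in r. -/

import Mathlib

open Real MeasureTheory Set Filter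

noncomputable section

/-- Partial derivative with respect to the first (time) variable. -/
def pt (u : ℝ → ℝ → ℝ) (t r : ℝ) : ℝ := deriv (fun s => u s r) t

/-- Partial derivative with respect to the second (space) variable. -/
def pr (u : ℝ → ℝ → ℝ) (t r : ℝ) : ℝ := deriv (fun s => u t s) r

/-- Second partial derivative in time. -/
def ptt (u : ℝ → ℝ → ℝ) (t r : ℝ) : ℝ := deriv (fun s => pt u s r) t

/-- Second partial derivative in space. -/
def prr (u : ℝ → ℝ → ℝ) (t r : ℝ) : ℝ := deriv (fun s => pr u t s) r

/-- Vlasov contribution to the energy density. -/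
def vRho (f : ℝ → ℝ → ℝ → ℝ → ℝ) (t r : ℝ) : ℝ :=
  (π / t ^ 2) * ∫ w : ℝ, ∫ F in Ioi (0 : ℝ), Real.sqrt (1 + w ^ 2 + F / t ^ 2) * f t r w F

/-- Vlasov contribution to the radial pressure. -/
def vP (f : ℝ → ℝ → ℝ → ℝ → ℝ) (t r : ℝ) : ℝ :=
  (π / t ^ 2) * ∫ w : ℝ, ∫ F in Ioi (0 : ℝ),
    (w ^ 2 / Real.sqrt (1 + w ^ 2 + F / t ^ 2)) * f t r w F

/-- Vlasov contribution to the momentum density. -/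
def vJ (f : ℝ → ℝ → ℝ → ℝ → ℝ) (t r : ℝ) : ℝ :=
  (π / t ^ 2) * ∫ w : ℝ, ∫ F in Ioi (0 : ℝ), w * f t r w F

/-- Energy density ρ of the Einstein-Vlasov-scalar field system. -/
def rho (f : ℝ → ℝ → ℝ → ℝ → ℝ) (lam mu phi : ℝ → ℝ → ℝ) (t r : ℝ) : ℝ :=
  vRho f t r + (1 / 2) * (Real.exp (-(2 * mu t r)) * (pt phi t r) ^ 2
    + Real.exp (-(2 * lam t r)) * (pr phi t r) ^ 2)

/-- Radial pressure p of the Einstein-Vlasov-scalar field system. -/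
def pres (f : ℝ → ℝ → ℝ → ℝ → ℝ) (lam mu phi : ℝ → ℝ → ℝ) (t r : ℝ) : ℝ :=
  vP f t r + (1 / 2) * (Real.exp (-(2 * mu t r)) * (pt phi t r) ^ 2
    + Real.exp (-(2 * lam t r)) * (pr phi t r) ^ 2)

/-- Momentum density j of the Einstein-Vlasov-scalar field system. -/
def mom (f : ℝ → ℝ → ℝ → ℝ → ℝ) (lam mu phi : ℝ → ℝ → ℝ) (t r : ℝ) : ℝ :=
  vJ f t r - Real.exp (-(lam t r + mu t r)) * pt phi t r * pr phi t r

/-- A regular solution of the surface-symmetric Einstein-Vlasov-scalar field system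
with curvature parameter `k` on the time interval `I ⊆ (0,∞)`. -/
structure IsRegularSolution (k : ℝ) (f : ℝ → ℝ → ℝ → ℝ → ℝ) (lam mu phi : ℝ → ℝ → ℝ)
    (I : Set ℝ) : Prop where
  f_contDiff : ContDiffOn ℝ 1 (fun q : ℝ × ℝ × ℝ × ℝ => f q.1 q.2.1 q.2.2.1 q.2.2.2)
    {q : ℝ × ℝ × ℝ × ℝ | q.1 ∈ I ∧ 0 ≤ q.2.2.2}
  f_nonneg : ∀ t ∈ I, ∀ (r w F : ℝ), 0 ≤ f t r w F
  f_periodic : ∀ (t r w F : ℝ), f t (r + 1) w F = f t r w F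
  supp_bounded : ∀ a ∈ I, ∀ b ∈ I, ∃ C : ℝ, ∀ t ∈ Icc a b, ∀ (r w F : ℝ),
    f t r w F ≠ 0 → |w| ≤ C ∧ F ≤ C
  lam_contDiff : ContDiffOn ℝ 1 (fun q : ℝ × ℝ => lam q.1 q.2) (I ×ˢ (univ : Set ℝ))
  mu_contDiff : ContDiffOn ℝ 2 (fun q : ℝ × ℝ => mu q.1 q.2) (I ×ˢ (univ : Set ℝ))
  phi_contDiff : ContDiffOn ℝ 2 (fun q : ℝ × ℝ => phi q.1 q.2) (I ×ˢ (univ : Set ℝ))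
  lam_periodic : ∀ (t r : ℝ), lam t (r + 1) = lam t r
  mu_periodic : ∀ (t r : ℝ), mu t (r + 1) = mu t r
  phi_periodic : ∀ (t r : ℝ), phi t (r + 1) = phi t r
  /-- (V): the Vlasov equation. -/
  eqV : ∀ t ∈ I, ∀ (r w F : ℝ), 0 ≤ F →
    deriv (fun s => f s r w F) t
      + (Real.exp (mu t r - lam t r) * w / Real.sqrt (1 + w ^ 2 + F / t ^ 2))
          * deriv (fun s => f t s w F) r
      - (pt lam t r * w + Real.exp (mu t r - lam t r) * pr mu t r
          * Real.sqrt (1 + w ^ 2 + F / t ^ 2)) * deriv (fun s => f t r s F) w = 0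
  /-- (E1). -/
  eqE1 : ∀ t ∈ I, ∀ r : ℝ,
    Real.exp (-(2 * mu t r)) * (2 * t * pt lam t r + 1) + k
      = 8 * π * t ^ 2 * rho f lam mu phi t r
  /-- (E2). -/
  eqE2 : ∀ t ∈ I, ∀ r : ℝ,
    Real.exp (-(2 * mu t r)) * (2 * t * pt mu t r - 1) - k
      = 8 * π * t ^ 2 * pres f lam mu phi t r
  /-- (E3). -/
  eqE3 : ∀ t ∈ I, ∀ r : ℝ,
    pr mu t r = -(4 * π * t) * Real.exp (lam t r + mu t r) * mom f lam mu phi t r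
  /-- (W): the wave equation for the scalar field. -/
  eqW : ∀ t ∈ I, ∀ r : ℝ,
    Real.exp (-(2 * lam t r)) * prr phi t r - Real.exp (-(2 * mu t r)) * ptt phi t r
      - Real.exp (-(2 * mu t r)) * (pt lam t r - pt mu t r + 2 / t) * pt phi t r
      - Real.exp (-(2 * lam t r)) * (pr lam t r - pr mu t r) * pr phi t r = 0

/-- Admissible initial data at `t = 1` for the surface-symmetric
Einstein-Vlasov-scalar field system. -/
structure IsInitialData (f0 : ℝ → ℝ → ℝ → ℝ) (lam0 mu0 phi0 psi : ℝ → ℝ) : Prop where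
  f0_contDiff : ContDiffOn ℝ 1 (fun q : ℝ × ℝ × ℝ => f0 q.1 q.2.1 q.2.2)
    {q : ℝ × ℝ × ℝ | 0 ≤ q.2.2}
  f0_nonneg : ∀ (r w F : ℝ), 0 ≤ f0 r w F
  f0_periodic : ∀ (r w F : ℝ), f0 (r + 1) w F = f0 r w F
  f0_supp : ∃ C : ℝ, ∀ (r w F : ℝ), f0 r w F ≠ 0 → |w| ≤ C ∧ F ≤ C
  lam0_C1 : ContDiff ℝ 1 lam0
  psi_C1 : ContDiff ℝ 1 psi
  mu0_C2 : ContDiff ℝ 2 mu0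
  phi0_C2 : ContDiff ℝ 2 phi0
  lam0_periodic : ∀ r : ℝ, lam0 (r + 1) = lam0 r
  mu0_periodic : ∀ r : ℝ, mu0 (r + 1) = mu0 r
  phi0_periodic : ∀ r : ℝ, phi0 (r + 1) = phi0 r
  psi_periodic : ∀ r : ℝ, psi (r + 1) = psi r
  /-- The constraint (E3) holds at `t = 1`. -/
  constraint : ∀ r : ℝ, deriv mu0 r = -(4 * π) * Real.exp (lam0 r + mu0 r) *
    (π * (∫ w : ℝ, ∫ F in Ioi (0 : ℝ), w * f0 r w F)
      - Real.exp (-(lam0 r + mu0 r)) * psi r * deriv phi0 r)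

/-- A solution attains the initial data `(f0, lam0, mu0, phi0, psi)` at `t = 1`. -/
def AttainsData (f : ℝ → ℝ → ℝ → ℝ → ℝ) (lam mu phi : ℝ → ℝ → ℝ)
    (f0 : ℝ → ℝ → ℝ → ℝ) (lam0 mu0 phi0 psi : ℝ → ℝ) : Prop :=
  (∀ (r w F : ℝ), f 1 r w F = f0 r w F) ∧ (∀ r : ℝ, lam 1 r = lam0 r) ∧
    (∀ r : ℝ, mu 1 r = mu0 r) ∧ (∀ r : ℝ, phi 1 r = phi0 r) ∧
    (∀ r : ℝ, pt phi 1 r = psi r)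

/-- A left-maximal regular solution on `(T,1]` attaining the given data at `t = 1`:
it admits no extension to a regular solution on `(T',1]` with `0 ≤ T' < T`. -/
def IsLeftMaximalSolution (k : ℝ) (f : ℝ → ℝ → ℝ → ℝ → ℝ) (lam mu phi : ℝ → ℝ → ℝ)
    (T : ℝ) (f0 : ℝ → ℝ → ℝ → ℝ) (lam0 mu0 phi0 psi : ℝ → ℝ) : Prop :=
  IsRegularSolution k f lam mu phi (Ioc T 1) ∧
  AttainsData f lam mu phi f0 lam0 mu0 phi0 psi ∧
  ∀ T' : ℝ, 0 ≤ T' → T' < T →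
    ¬ ∃ (f' : ℝ → ℝ → ℝ → ℝ → ℝ) (lam' mu' phi' : ℝ → ℝ → ℝ),
      IsRegularSolution k f' lam' mu' phi' (Ioc T' 1) ∧
      AttainsData f' lam' mu' phi' f0 lam0 mu0 phi0 psi ∧
      (∀ t ∈ Ioc T 1, ∀ (r w F : ℝ), f' t r w F = f t r w F) ∧
      (∀ t ∈ Ioc T 1, ∀ r : ℝ, lam' t r = lam t r ∧ mu' t r = mu t r ∧ phi' t r = phi t r)

section AuxLemmas

lemma exp_neg_two_sq (x : ℝ) : Real.exp (-(2 * x)) = Real.exp (-x) ^ 2 := by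
  rw [sq, ← Real.exp_add]; ring_nf

lemma prod_restrict_eq :
    (volume : Measure ℝ).prod ((volume : Measure ℝ).restrict (Ioi 0))
      = (volume : Measure (ℝ × ℝ)).restrict ((univ : Set ℝ) ×ˢ Ioi (0 : ℝ)) := by
  rw [Measure.volume_eq_prod, ← Measure.prod_restrict, Measure.restrict_univ]

lemma integrable_aux {g : ℝ → ℝ → ℝ}
    (hgc : ContinuousOn (fun z : ℝ × ℝ => g z.1 z.2) ((univ : Set ℝ) ×ˢ Ici (0 : ℝ)))
    {C : ℝ} (hC : 0 ≤ C)
    (hsupp : ∀ w F : ℝ, 0 < F → g w F ≠ 0 → |w| ≤ C ∧ F ≤ C)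
    {u : ℝ × ℝ → ℝ} (hu : ContinuousOn u ((univ : Set ℝ) ×ˢ Ioi (0 : ℝ)))
    {Mu : ℝ} (hMu : ∀ z ∈ (Icc (-C) C ×ˢ Icc (0 : ℝ) C : Set (ℝ × ℝ)), |u z| ≤ Mu) :
    Integrable (fun z : ℝ × ℝ => u z * g z.1 z.2)
      ((volume : Measure ℝ).prod ((volume : Measure ℝ).restrict (Ioi 0))) := by
  have hset : MeasurableSet ((univ : Set ℝ) ×ˢ Ioi (0 : ℝ)) :=
    MeasurableSet.univ.prod measurableSet_Ioi
  have hKmeas : MeasurableSet (Icc (-C) C ×ˢ Icc (0 : ℝ) C : Set (ℝ × ℝ)) :=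
    measurableSet_Icc.prod measurableSet_Icc
  have hKcomp : IsCompact (Icc (-C) C ×ˢ Icc (0 : ℝ) C : Set (ℝ × ℝ)) :=
    isCompact_Icc.prod isCompact_Icc
  have hKsub : (Icc (-C) C ×ˢ Icc (0 : ℝ) C : Set (ℝ × ℝ)) ⊆ (univ : Set ℝ) ×ˢ Ici (0 : ℝ) :=
    fun z hz => ⟨mem_univ _, hz.2.1⟩
  obtain ⟨M, hM⟩ := hKcomp.exists_bound_of_continuousOn (hgc.mono hKsub)
  have hzero : ((0 : ℝ), (0 : ℝ)) ∈ (Icc (-C) C ×ˢ Icc (0 : ℝ) C : Set (ℝ × ℝ)) :=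
    ⟨⟨neg_nonpos.mpr hC, hC⟩, ⟨le_refl 0, hC⟩⟩
  have hM0 : 0 ≤ M := le_trans (norm_nonneg _) (hM _ hzero)
  have hMu0 : 0 ≤ Mu := le_trans (abs_nonneg _) (hMu _ hzero)
  have haesm : AEStronglyMeasurable (fun z : ℝ × ℝ => u z * g z.1 z.2)
      ((volume : Measure ℝ).prod ((volume : Measure ℝ).restrict (Ioi 0))) := by
    rw [prod_restrict_eq]
    exact ((hu.mul (hgc.mono (fun z hz => ⟨mem_univ _, mem_Ici.mpr (le_of_lt hz.2)⟩))).aestronglyMeasurable hset)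
  have hbound : Integrable
      ((Icc (-C) C ×ˢ Icc (0 : ℝ) C : Set (ℝ × ℝ)).indicator (fun _ => Mu * M))
      ((volume : Measure ℝ).prod ((volume : Measure ℝ).restrict (Ioi 0))) := by
    rw [prod_restrict_eq]
    refine IntegrableOn.integrable_indicator ?_ hKmeas
    refine (integrableOn_const_iff).mpr (Or.inr ?_)
    calc ((volume : Measure (ℝ × ℝ)).restrict ((univ : Set ℝ) ×ˢ Ioi (0 : ℝ)))
          (Icc (-C) C ×ˢ Icc (0 : ℝ) C)
        ≤ (volume : Measure (ℝ × ℝ)) (Icc (-C) C ×ˢ Icc (0 : ℝ) C) :=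
          Measure.restrict_apply_le _ _
      _ < ⊤ := hKcomp.measure_lt_top
  refine hbound.mono' haesm ?_
  rw [prod_restrict_eq]
  filter_upwards [ae_restrict_mem hset] with z hz
  by_cases hg0 : g z.1 z.2 = 0
  · rw [hg0, mul_zero, norm_zero]
    exact Set.indicator_nonneg (fun _ _ => mul_nonneg hMu0 hM0) _
  · obtain ⟨hw, hF⟩ := hsupp z.1 z.2 hz.2 hg0
    have hzK : z ∈ (Icc (-C) C ×ˢ Icc (0 : ℝ) C : Set (ℝ × ℝ)) := by
      refine ⟨?_, ⟨le_of_lt hz.2, hF⟩⟩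
      have := abs_le.mp hw
      exact ⟨this.1, this.2⟩
    rw [Set.indicator_of_mem hzK, norm_mul]
    refine mul_le_mul ?_ (hM z hzK) (norm_nonneg _) hMu0
    simpa [Real.norm_eq_abs] using hMu z hzK

lemma abs_vJ_le {k : ℝ} {f : ℝ → ℝ → ℝ → ℝ → ℝ} {lam mu phi : ℝ → ℝ → ℝ}
    (hsol : IsRegularSolution k f lam mu phi (Ioc 0 1)) {t : ℝ} (ht : t ∈ Ioc (0 : ℝ) 1)
    (r : ℝ) : |vJ f t r| ≤ (vRho f t r + vP f t r) / 2 := by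
  obtain ⟨ht0, ht1⟩ := ht
  obtain ⟨C0, hC0⟩ := hsol.supp_bounded t ⟨ht0, ht1⟩ 1 ⟨one_pos, le_refl 1⟩
  set C := max C0 0 with hCdef
  have hCnn : 0 ≤ C := le_max_right _ _
  have hsupp : ∀ w F : ℝ, 0 < F → f t r w F ≠ 0 → |w| ≤ C ∧ F ≤ C := by
    intro w F _ h
    obtain ⟨h1, h2⟩ := hC0 t ⟨le_refl t, ht1⟩ r w F h
    exact ⟨h1.trans (le_max_left _ _), h2.trans (le_max_left _ _)⟩
  have hgc : ContinuousOn (fun z : ℝ × ℝ => f t r z.1 z.2) ((univ : Set ℝ) ×ˢ Ici (0 : ℝ)) := by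
    have h4 := hsol.f_contDiff.continuousOn
    have hφ : Continuous (fun z : ℝ × ℝ => ((t, r, z.1, z.2) : ℝ × ℝ × ℝ × ℝ)) := by
      continuity
    exact h4.comp hφ.continuousOn (fun z hz => ⟨⟨ht0, ht1⟩, hz.2⟩)
  have hgnn : ∀ w F : ℝ, 0 ≤ f t r w F := fun w F => hsol.f_nonneg t ⟨ht0, ht1⟩ r w F
  have ht2 : (0 : ℝ) < t ^ 2 := by positivity
  -- the weight functions
  set sq : ℝ × ℝ → ℝ := fun z => Real.sqrt (1 + z.1 ^ 2 + z.2 / t ^ 2) with hsqdef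
  have harg : ∀ z : ℝ × ℝ, 0 ≤ z.2 → 1 ≤ 1 + z.1 ^ 2 + z.2 / t ^ 2 := by
    intro z h2
    have h3 : 0 ≤ z.2 / t ^ 2 := div_nonneg h2 ht2.le
    nlinarith [sq_nonneg z.1]
  have hs1 : ∀ z : ℝ × ℝ, 0 ≤ z.2 → 1 ≤ sq z := by
    intro z h2
    have := Real.sqrt_le_sqrt (harg z h2)
    rwa [Real.sqrt_one] at this
  have hargc : Continuous (fun z : ℝ × ℝ => 1 + z.1 ^ 2 + z.2 / t ^ 2) := by
    apply Continuous.add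
    · exact continuous_const.add ((continuous_fst).pow 2)
    · exact continuous_snd.div_const _
  have hsqc : Continuous sq := Real.continuous_sqrt.comp hargc
  -- integrability of the three weighted integrands
  have Iw : Integrable (fun z : ℝ × ℝ => z.1 * f t r z.1 z.2)
      ((volume : Measure ℝ).prod ((volume : Measure ℝ).restrict (Ioi 0))) := by
    refine integrable_aux hgc hCnn hsupp (continuous_fst.continuousOn) (Mu := C) ?_
    intro z hz
    exact abs_le.mpr ⟨hz.1.1, hz.1.2⟩
  have Is : Integrable (fun z : ℝ × ℝ => sq z * f t r z.1 z.2)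
      ((volume : Measure ℝ).prod ((volume : Measure ℝ).restrict (Ioi 0))) := by
    refine integrable_aux hgc hCnn hsupp hsqc.continuousOn
      (Mu := Real.sqrt (1 + C ^ 2 + C / t ^ 2)) ?_
    intro z hz
    rw [abs_of_nonneg (Real.sqrt_nonneg _)]
    apply Real.sqrt_le_sqrt
    have h1 : z.1 ^ 2 ≤ C ^ 2 := sq_le_sq' hz.1.1 hz.1.2
    have h2 : z.2 / t ^ 2 ≤ C / t ^ 2 := by gcongr; exact hz.2.2
    linarith
  have Ip : Integrable (fun z : ℝ × ℝ => (z.1 ^ 2 / sq z) * f t r z.1 z.2)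
      ((volume : Measure ℝ).prod ((volume : Measure ℝ).restrict (Ioi 0))) := by
    have hupc : ContinuousOn (fun z : ℝ × ℝ => z.1 ^ 2 / sq z)
        ((univ : Set ℝ) ×ˢ Ioi (0 : ℝ)) := by
      apply ContinuousOn.div ((continuous_fst.pow 2).continuousOn) hsqc.continuousOn
      intro z hz
      have := hs1 z (le_of_lt hz.2)
      linarith
    refine integrable_aux hgc hCnn hsupp hupc (Mu := C ^ 2) ?_
    intro z hz
    have h1 : z.1 ^ 2 / sq z ≤ z.1 ^ 2 := div_le_self (sq_nonneg _) (hs1 z hz.2.1)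
    have h0 : 0 ≤ z.1 ^ 2 / sq z := div_nonneg (sq_nonneg _) (Real.sqrt_nonneg _)
    rw [abs_of_nonneg h0]
    exact h1.trans (sq_le_sq' hz.1.1 hz.1.2)
  -- convert iterated integrals to product integrals
  have heqJ : (∫ w : ℝ, ∫ F in Ioi (0 : ℝ), w * f t r w F)
      = ∫ z : ℝ × ℝ, z.1 * f t r z.1 z.2
          ∂((volume : Measure ℝ).prod ((volume : Measure ℝ).restrict (Ioi 0))) :=
    MeasureTheory.integral_integral Iw
  have heqS : (∫ w : ℝ, ∫ F in Ioi (0 : ℝ), Real.sqrt (1 + w ^ 2 + F / t ^ 2) * f t r w F)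
      = ∫ z : ℝ × ℝ, sq z * f t r z.1 z.2
          ∂((volume : Measure ℝ).prod ((volume : Measure ℝ).restrict (Ioi 0))) :=
    MeasureTheory.integral_integral Is
  have heqP : (∫ w : ℝ, ∫ F in Ioi (0 : ℝ),
        (w ^ 2 / Real.sqrt (1 + w ^ 2 + F / t ^ 2)) * f t r w F)
      = ∫ z : ℝ × ℝ, (z.1 ^ 2 / sq z) * f t r z.1 z.2
          ∂((volume : Measure ℝ).prod ((volume : Measure ℝ).restrict (Ioi 0))) :=
    MeasureTheory.integral_integral Ip
  -- pointwise comparison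
  have hmono : (∫ z : ℝ × ℝ, ‖z.1 * f t r z.1 z.2‖
          ∂((volume : Measure ℝ).prod ((volume : Measure ℝ).restrict (Ioi 0))))
      ≤ ∫ z : ℝ × ℝ, (1 / 2) * (sq z * f t r z.1 z.2 + (z.1 ^ 2 / sq z) * f t r z.1 z.2)
          ∂((volume : Measure ℝ).prod ((volume : Measure ℝ).restrict (Ioi 0))) := by
    refine integral_mono_ae Iw.norm ((Is.add Ip).const_mul (1 / 2)) ?_
    rw [prod_restrict_eq]
    filter_upwards [ae_restrict_mem (MeasurableSet.univ.prod measurableSet_Ioi)] with z hz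
    have hF : 0 < z.2 := hz.2
    have hspos : 0 < sq z := lt_of_lt_of_le one_pos (hs1 z hF.le)
    have hsq2 : sq z ^ 2 = 1 + z.1 ^ 2 + z.2 / t ^ 2 :=
      Real.sq_sqrt (le_trans zero_le_one (harg z hF.le))
    have hkey : 2 * |z.1| ≤ sq z + z.1 ^ 2 / sq z := by
      have h2 : 2 * |z.1| * sq z ≤ sq z ^ 2 + z.1 ^ 2 := by
        nlinarith [sq_nonneg (|z.1| - sq z), sq_abs z.1]
      calc 2 * |z.1| ≤ (sq z ^ 2 + z.1 ^ 2) / sq z := (le_div_iff₀ hspos).mpr h2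
        _ = sq z + z.1 ^ 2 / sq z := by field_simp
    have hfnn := hgnn z.1 z.2
    rw [Real.norm_eq_abs, abs_mul, abs_of_nonneg hfnn]
    calc |z.1| * f t r z.1 z.2 ≤ (1 / 2) * (sq z + z.1 ^ 2 / sq z) * f t r z.1 z.2 := by
          apply mul_le_mul_of_nonneg_right _ hfnn
          linarith
      _ = (1 / 2) * (sq z * f t r z.1 z.2 + (z.1 ^ 2 / sq z) * f t r z.1 z.2) := by ring
  have hsplit : (∫ z : ℝ × ℝ, (1 / 2) * (sq z * f t r z.1 z.2 + (z.1 ^ 2 / sq z) * f t r z.1 z.2)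
          ∂((volume : Measure ℝ).prod ((volume : Measure ℝ).restrict (Ioi 0))))
      = (1 / 2) * ((∫ z : ℝ × ℝ, sq z * f t r z.1 z.2
            ∂((volume : Measure ℝ).prod ((volume : Measure ℝ).restrict (Ioi 0))))
        + (∫ z : ℝ × ℝ, (z.1 ^ 2 / sq z) * f t r z.1 z.2
            ∂((volume : Measure ℝ).prod ((volume : Measure ℝ).restrict (Ioi 0))))) := by
    rw [MeasureTheory.integral_const_mul, MeasureTheory.integral_add Is Ip]
  have hfinal : |∫ w : ℝ, ∫ F in Ioi (0 : ℝ), w * f t r w F|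
      ≤ (1 / 2) * ((∫ w : ℝ, ∫ F in Ioi (0 : ℝ), Real.sqrt (1 + w ^ 2 + F / t ^ 2) * f t r w F)
        + (∫ w : ℝ, ∫ F in Ioi (0 : ℝ),
            (w ^ 2 / Real.sqrt (1 + w ^ 2 + F / t ^ 2)) * f t r w F)) := by
    rw [heqJ, heqS, heqP]
    calc |∫ z : ℝ × ℝ, z.1 * f t r z.1 z.2
            ∂((volume : Measure ℝ).prod ((volume : Measure ℝ).restrict (Ioi 0)))|
        ≤ ∫ z : ℝ × ℝ, ‖z.1 * f t r z.1 z.2‖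
            ∂((volume : Measure ℝ).prod ((volume : Measure ℝ).restrict (Ioi 0))) := by
          rw [← Real.norm_eq_abs]
          exact norm_integral_le_integral_norm _
      _ ≤ _ := hmono
      _ = _ := hsplit
  have hpt : 0 ≤ π / t ^ 2 := div_nonneg Real.pi_pos.le ht2.le
  unfold vJ vRho vP
  rw [abs_mul, abs_of_nonneg hpt]
  calc (π / t ^ 2) * |∫ w : ℝ, ∫ F in Ioi (0 : ℝ), w * f t r w F|
      ≤ (π / t ^ 2) * ((1 / 2) * ((∫ w : ℝ, ∫ F in Ioi (0 : ℝ),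
            Real.sqrt (1 + w ^ 2 + F / t ^ 2) * f t r w F)
        + (∫ w : ℝ, ∫ F in Ioi (0 : ℝ),
            (w ^ 2 / Real.sqrt (1 + w ^ 2 + F / t ^ 2)) * f t r w F))) :=
        mul_le_mul_of_nonneg_left hfinal hpt
    _ = _ := by ring

lemma vP_nonneg {f : ℝ → ℝ → ℝ → ℝ → ℝ} {k : ℝ} {lam mu phi : ℝ → ℝ → ℝ}
    (hsol : IsRegularSolution k f lam mu phi (Ioc 0 1)) {t : ℝ} (ht : t ∈ Ioc (0 : ℝ) 1)
    (r : ℝ) : 0 ≤ vP f t r := by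
  have hpt : 0 ≤ π / t ^ 2 := div_nonneg Real.pi_pos.le (sq_nonneg t)
  refine mul_nonneg hpt (integral_nonneg fun w => ?_)
  refine setIntegral_nonneg measurableSet_Ioi fun F _ => ?_
  exact mul_nonneg (div_nonneg (sq_nonneg w) (Real.sqrt_nonneg _))
    (hsol.f_nonneg t ht r w F)

lemma pres_nonneg {f : ℝ → ℝ → ℝ → ℝ → ℝ} {k : ℝ} {lam mu phi : ℝ → ℝ → ℝ}
    (hsol : IsRegularSolution k f lam mu phi (Ioc 0 1)) {t : ℝ} (ht : t ∈ Ioc (0 : ℝ) 1)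
    (r : ℝ) : 0 ≤ pres f lam mu phi t r := by
  have h1 := vP_nonneg hsol ht r
  unfold pres
  have h2 : 0 ≤ Real.exp (-(2 * mu t r)) * (pt phi t r) ^ 2 := by positivity
  have h3 : 0 ≤ Real.exp (-(2 * lam t r)) * (pr phi t r) ^ 2 := by positivity
  linarith

lemma abs_mom_le {f : ℝ → ℝ → ℝ → ℝ → ℝ} {k : ℝ} {lam mu phi : ℝ → ℝ → ℝ}
    (hsol : IsRegularSolution k f lam mu phi (Ioc 0 1)) {t : ℝ} (ht : t ∈ Ioc (0 : ℝ) 1)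
    (r : ℝ) : 2 * |mom f lam mu phi t r|
      ≤ rho f lam mu phi t r + pres f lam mu phi t r := by
  have h1 := abs_vJ_le hsol ht r
  set X := pt phi t r
  set Y := pr phi t r
  set u := Real.exp (-(mu t r)) with hu
  set v := Real.exp (-(lam t r)) with hv
  have he1 : Real.exp (-(lam t r + mu t r)) = v * u := by
    rw [hu, hv, ← Real.exp_add]; ring_nf
  have he2 : Real.exp (-(2 * mu t r)) = u ^ 2 := by
    rw [hu, sq, ← Real.exp_add]; ring_nf
  have he3 : Real.exp (-(2 * lam t r)) = v ^ 2 := by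
    rw [hv, sq, ← Real.exp_add]; ring_nf
  have h2 : 2 * |Real.exp (-(lam t r + mu t r)) * X * Y| ≤ u ^ 2 * X ^ 2 + v ^ 2 * Y ^ 2 := by
    rw [he1]
    have habs : |v * u * X * Y| = |u * X| * |v * Y| := by
      rw [← abs_mul]; ring_nf
    rw [habs]
    nlinarith [sq_nonneg (|u * X| - |v * Y|), sq_abs (u * X), sq_abs (v * Y)]
  have htri : |mom f lam mu phi t r|
      ≤ |vJ f t r| + |Real.exp (-(lam t r + mu t r)) * X * Y| := by
    unfold mom
    calc |vJ f t r - Real.exp (-(lam t r + mu t r)) * X * Y|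
        ≤ |vJ f t r| + |-(Real.exp (-(lam t r + mu t r)) * X * Y)| := by
          rw [sub_eq_add_neg]; exact abs_add_le _ _
      _ = _ := by rw [abs_neg]
  unfold rho pres
  rw [he2, he3]
  linarith

lemma mu_slice_hasDerivAt {f : ℝ → ℝ → ℝ → ℝ → ℝ} {k : ℝ} {lam mu phi : ℝ → ℝ → ℝ}
    (hsol : IsRegularSolution k f lam mu phi (Ioc 0 1)) (r : ℝ) {x : ℝ}
    (hx : x ∈ Ioo (0 : ℝ) 1) : HasDerivAt (fun s => mu s r) (pt mu x r) x := by
  have hopen : IsOpen ((Ioo (0 : ℝ) 1) ×ˢ (univ : Set ℝ)) := isOpen_Ioo.prod isOpen_univ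
  have h1 : ContDiffOn ℝ 2 (fun q : ℝ × ℝ => mu q.1 q.2) ((Ioo (0 : ℝ) 1) ×ˢ univ) :=
    hsol.mu_contDiff.mono (prod_mono Ioo_subset_Ioc_self (subset_refl _))
  have h2 : ContDiffAt ℝ 2 (fun q : ℝ × ℝ => mu q.1 q.2) (x, r) :=
    h1.contDiffAt (hopen.mem_nhds ⟨hx, mem_univ r⟩)
  have h3 : DifferentiableAt ℝ (fun q : ℝ × ℝ => mu q.1 q.2) (x, r) :=
    h2.differentiableAt (by norm_num)
  have h4 : DifferentiableAt ℝ (fun s : ℝ => mu s r) x :=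
    by have := h3.comp x ((differentiableAt_id (𝕜 := ℝ) (x := x)).prodMk (differentiableAt_const r)); exact this
  exact h4.hasDerivAt

lemma c_lower {f : ℝ → ℝ → ℝ → ℝ → ℝ} {k : ℝ} {lam mu phi : ℝ → ℝ → ℝ}
    (hsol : IsRegularSolution k f lam mu phi (Ioc 0 1)) (r : ℝ) {t : ℝ}
    (ht : t ∈ Ioc (0 : ℝ) 1) :
    Real.exp (-(2 * mu 1 r)) + k ≤ t * (Real.exp (-(2 * mu t r)) + k) := by
  obtain ⟨ht0, ht1⟩ := ht
  set g : ℝ → ℝ := fun x => x * (Real.exp (-(2 * mu x r)) + k) with hg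
  have hmucont : ContinuousOn (fun x => mu x r) (Icc t 1) := by
    have h1 : ContinuousOn (fun q : ℝ × ℝ => mu q.1 q.2) ((Ioc (0:ℝ) 1) ×ˢ univ) :=
      hsol.mu_contDiff.continuousOn
    have hφ : Continuous (fun x : ℝ => ((x, r) : ℝ × ℝ)) := by continuity
    exact h1.comp hφ.continuousOn
      (fun x hx => ⟨⟨lt_of_lt_of_le ht0 hx.1, hx.2⟩, mem_univ r⟩)
  have hgcont : ContinuousOn g (Icc t 1) := by
    apply ContinuousOn.mul continuousOn_id
    apply ContinuousOn.add _ continuousOn_const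
    exact Real.continuous_exp.comp_continuousOn ((continuousOn_const.mul hmucont).neg)
  have hkey : ∀ x ∈ Ioo t 1, HasDerivAt g
      (-(8 * π * x ^ 2 * pres f lam mu phi x r)) x := by
    intro x hx
    have hx01 : x ∈ Ioo (0 : ℝ) 1 := ⟨lt_trans ht0 hx.1, hx.2⟩
    have hxI : x ∈ Ioc (0 : ℝ) 1 := ⟨hx01.1, hx01.2.le⟩
    have hm := mu_slice_hasDerivAt hsol r hx01
    have hE : HasDerivAt (fun s : ℝ => Real.exp (-(2 * mu s r)) + k)
        (Real.exp (-(2 * mu x r)) * (-(2 * pt mu x r))) x := by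
      have h1 : HasDerivAt (fun s : ℝ => -(2 * mu s r)) (-(2 * pt mu x r)) x :=
        ((hm.const_mul (2 : ℝ)).neg)
      exact (h1.exp).add_const k
    have hgx : HasDerivAt g
        (1 * (Real.exp (-(2 * mu x r)) + k)
          + x * (Real.exp (-(2 * mu x r)) * (-(2 * pt mu x r)))) x :=
      (hasDerivAt_id x).mul hE
    have hE2 := hsol.eqE2 x hxI r
    have : 1 * (Real.exp (-(2 * mu x r)) + k)
        + x * (Real.exp (-(2 * mu x r)) * (-(2 * pt mu x r)))
        = -(8 * π * x ^ 2 * pres f lam mu phi x r) := by linear_combination -hE2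
    rwa [this] at hgx
  have hanti : AntitoneOn g (Icc t 1) := by
    apply antitoneOn_of_deriv_nonpos (convex_Icc t 1) hgcont
    · intro x hx
      rw [interior_Icc] at hx
      exact ((hkey x hx).differentiableAt).differentiableWithinAt
    · intro x hx
      rw [interior_Icc] at hx
      rw [(hkey x hx).deriv]
      have hp := pres_nonneg hsol ⟨lt_trans ht0 hx.1, hx.2.le⟩ r
      have : 0 ≤ 8 * π * x ^ 2 * pres f lam mu phi x r := by positivity
      linarith
  have := hanti ⟨le_refl t, ht1⟩ ⟨ht1, le_refl 1⟩ ht1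
  simpa [hg] using this

lemma K2_core_nonneg {f : ℝ → ℝ → ℝ → ℝ → ℝ} {k : ℝ} {lam mu phi : ℝ → ℝ → ℝ}
    (hsol : IsRegularSolution k f lam mu phi (Ioc 0 1)) {t : ℝ} (ht : t ∈ Ioc (0 : ℝ) 1)
    (r : ℝ) :
    0 ≤ Real.exp (-(4 * mu t r)) * (pt lam t r) ^ 2
        + Real.exp (-(4 * mu t r)) * (pt mu t r) ^ 2
        - 2 * Real.exp (-(2 * (lam t r + mu t r))) * (pr mu t r) ^ 2 := by
  have hE1 := hsol.eqE1 t ht r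
  have hE2 := hsol.eqE2 t ht r
  have hE3 := hsol.eqE3 t ht r
  have hj := abs_mom_le hsol ht r
  set E := Real.exp (-(2 * mu t r)) with hEdef
  set P := Real.exp (-(lam t r + mu t r)) with hPdef
  have hexp4 : Real.exp (-(4 * mu t r)) = E ^ 2 := by
    rw [hEdef, sq, ← Real.exp_add]; ring_nf
  have hexp2 : Real.exp (-(2 * (lam t r + mu t r))) = P ^ 2 := by
    rw [hPdef, sq, ← Real.exp_add]; ring_nf
  set a := 8 * π * t ^ 2 * rho f lam mu phi t r with hadef
  set b := 8 * π * t ^ 2 * pres f lam mu phi t r with hbdef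
  set d := 8 * π * t ^ 2 * mom f lam mu phi t r with hddef
  have h8 : (0 : ℝ) ≤ 8 * π * t ^ 2 := by positivity
  have hd : 2 * |d| ≤ a + b := by
    rw [hddef, abs_mul, abs_of_nonneg h8]
    calc 2 * (8 * π * t ^ 2 * |mom f lam mu phi t r|)
        = 8 * π * t ^ 2 * (2 * |mom f lam mu phi t r|) := by ring
      _ ≤ 8 * π * t ^ 2 * (rho f lam mu phi t r + pres f lam mu phi t r) :=
          mul_le_mul_of_nonneg_left hj h8
      _ = a + b := by rw [hadef, hbdef]; ring
  have h1 : 2 * t * (E * pt lam t r) = a - (E + k) := by linear_combination hE1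
  have h2 : 2 * t * (E * pt mu t r) = b + (E + k) := by linear_combination hE2
  have hP1 : P * Real.exp (lam t r + mu t r) = 1 := by
    rw [hPdef, ← Real.exp_add,
      show -(lam t r + mu t r) + (lam t r + mu t r) = 0 by ring, Real.exp_zero]
  have h3 : 2 * t * (P * pr mu t r) = -d := by
    rw [hE3]
    linear_combination (-(8 * π * t ^ 2 * mom f lam mu phi t r)) * hP1
  have habs : 0 ≤ |d| := abs_nonneg d
  have h4d : 4 * d ^ 2 ≤ (a + b) ^ 2 := by nlinarith [hd, habs, sq_abs d]
  have key : 0 ≤ (a - (E + k)) ^ 2 + (b + (E + k)) ^ 2 - 2 * d ^ 2 := by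
    nlinarith [h4d, sq_nonneg (a - b - 2 * (E + k))]
  rw [← h1, ← h2] at key
  have h3' : d ^ 2 = (2 * t * (P * pr mu t r)) ^ 2 := by rw [h3]; ring
  rw [h3'] at key
  have htne : t ≠ 0 := ne_of_gt ht.1
  have hgoal : E ^ 2 * (pt lam t r) ^ 2 + E ^ 2 * (pt mu t r) ^ 2
        - 2 * P ^ 2 * (pr mu t r) ^ 2
      = ((2 * t * (E * pt lam t r)) ^ 2 + (2 * t * (E * pt mu t r)) ^ 2
          - 2 * (2 * t * (P * pr mu t r)) ^ 2) / (4 * t ^ 2) := by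
    field_simp
    ring
  rw [hexp4, hexp2, hgoal]
  exact div_nonneg key (by positivity)

end AuxLemmas
/-- Theorem 3.3: lower bound `(4/t⁶)(inf_r e^{−2μ̊} + k)²` for the
Kretschmann scalar of a regular solution on `(0,1]`, and uniform blow-up as `t → 0⁺`
when `inf_r e^{−2μ̊} + k > 0`. -/
theorem stmt8 (k : ℝ) (hk : k = -1 ∨ k = 0 ∨ k = 1)
    (f0 : ℝ → ℝ → ℝ → ℝ) (lam0 mu0 phi0 psi : ℝ → ℝ)
    (hdata : IsInitialData f0 lam0 mu0 phi0 psi)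
    (f : ℝ → ℝ → ℝ → ℝ → ℝ) (lam mu phi : ℝ → ℝ → ℝ)
    (hsol : IsRegularSolution k f lam mu phi (Ioc 0 1))
    (hatt : AttainsData f lam mu phi f0 lam0 mu0 phi0 psi)
    (hinf : 0 ≤ (⨅ r : ℝ, Real.exp (-(2 * mu0 r))) + k) :
    let K1 : ℝ → ℝ → ℝ := fun t r => 4 * (Real.exp (-(2 * lam t r))
        * (prr mu t r + pr mu t r * (pr mu t r - pr lam t r))
      - Real.exp (-(2 * mu t r))
        * (ptt lam t r + pt lam t r * (pt lam t r - pt mu t r))) ^ 2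
    let K2 : ℝ → ℝ → ℝ := fun t r => (8 / t ^ 2) *
      (Real.exp (-(4 * mu t r)) * (pt lam t r) ^ 2
        + Real.exp (-(4 * mu t r)) * (pt mu t r) ^ 2
        - 2 * Real.exp (-(2 * (lam t r + mu t r))) * (pr mu t r) ^ 2)
    let K3 : ℝ → ℝ → ℝ := fun t r => (4 / t ^ 4) * (Real.exp (-(2 * mu t r)) + k) ^ 2
    (∀ t ∈ Ioc (0 : ℝ) 1, ∀ r : ℝ,
      (4 / t ^ 6) * ((⨅ r' : ℝ, Real.exp (-(2 * mu0 r'))) + k) ^ 2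
        ≤ K1 t r + K2 t r + K3 t r) ∧
    (0 < (⨅ r : ℝ, Real.exp (-(2 * mu0 r))) + k →
      ∀ M : ℝ, ∃ δ : ℝ, 0 < δ ∧ ∀ t ∈ Ioc (0 : ℝ) 1, t < δ → ∀ r : ℝ,
        M ≤ K1 t r + K2 t r + K3 t r) := by
  intro K1 K2 K3
  set q := (⨅ r' : ℝ, Real.exp (-(2 * mu0 r'))) + k with hqdef
  have hq : 0 ≤ q := hinf
  have main : ∀ t ∈ Ioc (0 : ℝ) 1, ∀ r : ℝ,
      (4 / t ^ 6) * q ^ 2 ≤ K1 t r + K2 t r + K3 t r := by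
    intro t ht r
    have ht0 : 0 < t := ht.1
    have hK1 : 0 ≤ K1 t r := by
      show 0 ≤ 4 * (Real.exp (-(2 * lam t r))
          * (prr mu t r + pr mu t r * (pr mu t r - pr lam t r))
        - Real.exp (-(2 * mu t r))
          * (ptt lam t r + pt lam t r * (pt lam t r - pt mu t r))) ^ 2
      positivity
    have hK2 : 0 ≤ K2 t r := by
      show 0 ≤ (8 / t ^ 2) * (Real.exp (-(4 * mu t r)) * (pt lam t r) ^ 2
        + Real.exp (-(4 * mu t r)) * (pt mu t r) ^ 2
        - 2 * Real.exp (-(2 * (lam t r + mu t r))) * (pr mu t r) ^ 2)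
      have h8 : (0:ℝ) ≤ 8 / t ^ 2 := by positivity
      exact mul_nonneg h8 (K2_core_nonneg hsol ht r)
    have hc : q ≤ t * (Real.exp (-(2 * mu t r)) + k) := by
      have h1 := c_lower hsol r ht
      have h2 : (⨅ r' : ℝ, Real.exp (-(2 * mu0 r'))) ≤ Real.exp (-(2 * mu0 r)) := by
        refine ciInf_le ⟨0, ?_⟩ r
        rintro x ⟨r', rfl⟩
        exact Real.exp_nonneg _
      rw [hatt.2.2.1 r] at h1
      rw [hqdef]
      linarith
    have hc0 : 0 ≤ Real.exp (-(2 * mu t r)) + k := by nlinarith [hc, hq, ht0]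
    have hK3 : (4 / t ^ 6) * q ^ 2 ≤ K3 t r := by
      show (4 / t ^ 6) * q ^ 2 ≤ (4 / t ^ 4) * (Real.exp (-(2 * mu t r)) + k) ^ 2
      have hq2 : q ^ 2 ≤ (t * (Real.exp (-(2 * mu t r)) + k)) ^ 2 :=
        pow_le_pow_left₀ hq hc 2
      have heq : (4 / t ^ 6) * (t * (Real.exp (-(2 * mu t r)) + k)) ^ 2
          = (4 / t ^ 4) * (Real.exp (-(2 * mu t r)) + k) ^ 2 := by
        field_simp
      calc (4 / t ^ 6) * q ^ 2
          ≤ (4 / t ^ 6) * (t * (Real.exp (-(2 * mu t r)) + k)) ^ 2 := by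
            apply mul_le_mul_of_nonneg_left hq2
            positivity
        _ = _ := heq
    linarith
  refine ⟨main, ?_⟩
  intro hpos M
  have hqpos : 0 < q := hpos
  set B := max M 1 with hB
  have hB1 : (1 : ℝ) ≤ B := le_max_right _ _
  have hBpos : (0 : ℝ) < B := lt_of_lt_of_le one_pos hB1
  set A := 4 * q ^ 2 with hA
  have hApos : 0 < A := by rw [hA]; positivity
  refine ⟨min 1 (A / B), lt_min one_pos (div_pos hApos hBpos), ?_⟩
  intro t ht htδ r
  have h1 := main t ht r
  have ht0 : 0 < t := ht.1
  have ht1 : t ≤ 1 := ht.2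
  have htA : t < A / B := lt_of_lt_of_le htδ (min_le_right _ _)
  have htB : t * B < A := (lt_div_iff₀ hBpos).mp htA
  have ht6 : t ^ 6 ≤ t := by
    calc t ^ 6 ≤ t ^ 1 := pow_le_pow_of_le_one ht0.le ht1 (by norm_num)
      _ = t := pow_one t
  have ht6pos : 0 < t ^ 6 := by positivity
  have hfin : M ≤ (4 / t ^ 6) * q ^ 2 := by
    have hstep : B * t ^ 6 ≤ A := by nlinarith [ht6, hB1, hBpos, htB]
    have : B ≤ A / t ^ 6 := (le_div_iff₀ ht6pos).mpr hstep
    have hMB : M ≤ B := le_max_left _ _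
    have : M ≤ A / t ^ 6 := le_trans hMB this
    calc M ≤ A / t ^ 6 := this
      _ = (4 / t ^ 6) * q ^ 2 := by rw [hA]; ring
  linarith
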